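/- arXiv:math/0406294 — 2 statements merged into one kernel-verified Lean document; each statement's English description precedes it below -/
import Mathlib

section
/- Let A be a unital complex Banach algebra, let p, w ∈ A, and let U ⊆ ℂ be an open set such that p − λ·1 is invertible for every λ ∈ U. Then for every integer k ≥ 0 the map λ ↦ (p − λ)⁻¹·(w·(p − λ)⁻¹)^k is infinitely complex-differentiable on U, and for every integer m ≥ 1 its (m−1)-st derivative at λ ∈ U equals (m−1)! times the sum, over all (k+1)-tuples (m₀, m₁, …, m_k) of positive integers with m₀ + m₁ + ⋯ + m_k = m + k, of the noncommutative products (p − λ)^(−m₀)·w·(p − λ)^(−m₁)·w ⋯ w·(p − λ)^(−m_k). -/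
open Finset

section ResolventAux

variable {A : Type*} [NormedRing A] [NormedAlgebra ℂ A] [CompleteSpace A]

lemma hasDerivAt_res {p : A} {lam : ℂ} (h : IsUnit (p - lam • (1 : A))) :
    HasDerivAt (fun x : ℂ => Ring.inverse (p - x • (1 : A)))
      (Ring.inverse (p - lam • (1 : A)) ^ 2) lam := by
  have h1 : HasDerivAt (fun x : ℂ => p - x • (1 : A)) (-(1 : A)) lam := by
    simpa using ((hasDerivAt_id lam).smul_const (1 : A)).const_sub p
  have h2 := (hasFDerivAt_ringInverse (𝕜 := ℂ) h.unit).comp_hasDerivAt lam h1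
  have hval : Ring.inverse (p - lam • (1 : A)) = ((h.unit⁻¹ : Aˣ) : A) := by
    have := Ring.inverse_unit h.unit
    rwa [h.unit_spec] at this
  convert h2 using 1
  · rfl
  · rfl
  · simp [hval, sq]

lemma hasDerivAt_res_pow {p : A} {lam : ℂ} (h : IsUnit (p - lam • (1 : A))) (n : ℕ) :
    HasDerivAt (fun x : ℂ => Ring.inverse (p - x • (1 : A)) ^ n)
      (n • Ring.inverse (p - lam • (1 : A)) ^ (n + 1)) lam := by
  induction n with
  | zero => simpa using hasDerivAt_const lam (1 : A)
  | succ n ih =>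
      have := ih.mul (hasDerivAt_res h)
      convert this using 1
      · funext x; rw [pow_succ]; rfl
      · rw [smul_mul_assoc, ← pow_succ, ← pow_add, succ_nsmul]

lemma fin_update_succ {n : ℕ} (ms : Fin (n+1) → ℕ) (j : Fin n) (v : ℕ) (i : Fin n) :
    Function.update ms j.succ v i.succ = Function.update (fun t : Fin n => ms t.succ) j v i := by
  rcases eq_or_ne i j with rfl | hij
  · simp
  · rw [Function.update_of_ne (by simpa using hij), Function.update_of_ne hij]

lemma hasDerivAt_res_prod {p : A} {lam : ℂ} (h : IsUnit (p - lam • (1 : A))) (n : ℕ) :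
    ∀ (c : Fin n → A) (ms : Fin n → ℕ),
    HasDerivAt (fun x : ℂ =>
        (List.ofFn fun i => c i * Ring.inverse (p - x • (1 : A)) ^ ms i).prod)
      (∑ j, ms j • (List.ofFn fun i =>
          c i * Ring.inverse (p - lam • (1 : A)) ^ Function.update ms j (ms j + 1) i).prod) lam := by
  induction n with
  | zero => intro c ms; simpa using hasDerivAt_const lam (1 : A)
  | succ n ih =>
      intro c ms
      have hhead : HasDerivAt (fun x : ℂ => c 0 * Ring.inverse (p - x • (1 : A)) ^ ms 0)
          (c 0 * (ms 0 • Ring.inverse (p - lam • (1 : A)) ^ (ms 0 + 1))) lam :=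
        (hasDerivAt_res_pow h (ms 0)).const_mul (c 0)
      have htail := ih (fun i => c i.succ) (fun i => ms i.succ)
      have hmul := hhead.mul htail
      have hc : ∀ (a : ℕ) (x y : A), (a : A) * (x * y) = x * ((a : A) * y) := fun a x y => by
        rw [← mul_assoc, ← mul_assoc, (Nat.cast_commute a x).eq]
      convert hmul using 1
      · funext x; simp [List.ofFn_succ]
      · rw [Fin.sum_univ_succ]
        congr 1
        · have e0 : ∀ i : Fin n, Function.update ms 0 (ms 0 + 1) i.succ = ms i.succ :=
            fun i => Function.update_of_ne (Fin.succ_ne_zero i) _ _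
          simp only [List.ofFn_succ, List.prod_cons, Function.update_self, e0, smul_eq_mul,
            nsmul_eq_mul, Fin.cases_zero, Fin.cases_succ]
          simp only [mul_assoc]
          rw [hc]
        · rw [Finset.mul_sum]
          refine Finset.sum_congr rfl fun j _ => ?_
          have e1 : Function.update ms j.succ (ms j.succ + 1) 0 = ms 0 :=
            Function.update_of_ne (Fin.succ_ne_zero j).symm _ _
          simp only [List.ofFn_succ, List.prod_cons, e1, fin_update_succ, nsmul_eq_mul]
          simp only [mul_assoc]
          rw [hc, hc]

lemma comb_step {M : Type*} [AddCommMonoid M] (n N : ℕ) (g : (Fin n → ℕ) → M) :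
    ∑ ms ∈ (Finset.Nat.antidiagonalTuple n N).filter (fun ms => ∀ i, 1 ≤ ms i),
      ∑ j : Fin n, ms j • g (Function.update ms j (ms j + 1))
    = (N + 1 - n) •
      ∑ ms ∈ (Finset.Nat.antidiagonalTuple n (N + 1)).filter (fun ms => ∀ i, 1 ≤ ms i), g ms := by
  classical
  have hsum_update : ∀ (f : Fin n → ℕ) (j : Fin n) (v : ℕ),
      ∑ i, Function.update f j v i + f j = ∑ i, f i + v := by
    intro f j v
    rw [Finset.sum_update_of_mem (Finset.mem_univ j),
      Finset.sum_eq_sum_sdiff_singleton_add (Finset.mem_univ j) f]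
    omega
  have hfilter : ∀ q ∈ ((Finset.Nat.antidiagonalTuple n (N + 1)).filter
        (fun ms => ∀ i, 1 ≤ ms i)) ×ˢ (Finset.univ : Finset (Fin n)),
      (fun q : (Fin n → ℕ) × Fin n => (q.1 q.2 - 1) • g q.1) q ≠ 0 →
      2 ≤ q.1 q.2 := by
    intro q _ hq
    by_contra hle
    exact hq (by simp only; rw [show q.1 q.2 - 1 = 0 by omega, zero_smul])
  rw [← Finset.sum_product']
  have key : ∑ q ∈ ((Finset.Nat.antidiagonalTuple n N).filter (fun ms => ∀ i, 1 ≤ ms i)) ×ˢ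
        (Finset.univ : Finset (Fin n)),
        q.1 q.2 • g (Function.update q.1 q.2 (q.1 q.2 + 1))
      = ∑ q ∈ ((Finset.Nat.antidiagonalTuple n (N + 1)).filter (fun ms => ∀ i, 1 ≤ ms i)) ×ˢ
        (Finset.univ : Finset (Fin n)),
        (q.1 q.2 - 1) • g q.1 := by
    rw [← Finset.sum_filter_of_ne hfilter]
    refine Finset.sum_nbij' (fun q => (Function.update q.1 q.2 (q.1 q.2 + 1), q.2))
      (fun q => (Function.update q.1 q.2 (q.1 q.2 - 1), q.2)) ?_ ?_ ?_ ?_ ?_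
    · rintro ⟨ms, j⟩ hq
      simp only [Finset.mem_product, Finset.mem_filter, Finset.Nat.mem_antidiagonalTuple,
        Finset.mem_univ, and_true] at hq ⊢
      obtain ⟨hsum, hpos⟩ := hq
      refine ⟨⟨?_, ?_⟩, ?_⟩
      · have := hsum_update ms j (ms j + 1); omega
      · intro i
        rcases eq_or_ne i j with rfl | hij
        · simp
        · rw [Function.update_of_ne hij]; exact hpos i
      · have := hpos j
        simp only [Function.update_self]
        omega
    · rintro ⟨ms, j⟩ hq
      simp only [Finset.mem_filter, Finset.mem_product, Finset.Nat.mem_antidiagonalTuple,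
        Finset.mem_univ, and_true] at hq ⊢
      obtain ⟨⟨hsum, hpos⟩, h2⟩ := hq
      constructor
      · have := hsum_update ms j (ms j - 1); omega
      · intro i
        rcases eq_or_ne i j with rfl | hij
        · simp only [Function.update_self]; omega
        · rw [Function.update_of_ne hij]; exact hpos i
    · rintro ⟨ms, j⟩ _
      simp only [Prod.mk.injEq, and_true]
      funext i
      rcases eq_or_ne i j with rfl | hij
      · simp
      · rw [Function.update_of_ne hij, Function.update_of_ne hij]
    · rintro ⟨ms, j⟩ hq
      simp only [Finset.mem_filter] at hq
      simp only [Prod.mk.injEq, and_true]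
      funext i
      rcases eq_or_ne i j with rfl | hij
      · simp only [Function.update_self]
        have := hq.2; omega
      · rw [Function.update_of_ne hij, Function.update_of_ne hij]
    · rintro ⟨ms, j⟩ _
      simp
  rw [key, Finset.sum_product, Finset.smul_sum]
  refine Finset.sum_congr rfl fun ms hms => ?_
  show (∑ y : Fin n, (ms y - 1) • g ms) = _
  rw [← Finset.sum_smul]
  congr 1
  simp only [Finset.mem_filter, Finset.Nat.mem_antidiagonalTuple] at hms
  obtain ⟨hsum, hpos⟩ := hms
  have h1 : ∑ j : Fin n, (ms j - 1 + 1) = ∑ j : Fin n, ms j :=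
    Finset.sum_congr rfl fun j _ => by have := hpos j; omega
  have h2 : ∑ j : Fin n, (ms j - 1 + 1) = ∑ j : Fin n, (ms j - 1) + n := by
    rw [Finset.sum_add_distrib]
    simp
  omega

end ResolventAux

/-- **Derivatives of resolvent expressions in a Banach algebra.**
Let `A` be a unital complex Banach algebra, `p, w ∈ A`, `U ⊆ ℂ` open with `p − λ·1`
invertible for all `λ ∈ U`.  Then for every `k ≥ 0` the map
`λ ↦ (p−λ)⁻¹·(w·(p−λ)⁻¹)^k` is infinitely complex-differentiable on `U`, and for every `m ≥ 1`
its `(m−1)`-st derivative at `λ ∈ U` equals `(m−1)!` times the sum over `(k+1)`-tuples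
`(m₀,…,m_k)` of positive integers with `m₀+⋯+m_k = m+k` of the noncommutative products
`(p−λ)^(−m₀)·w·(p−λ)^(−m₁)·w ⋯ w·(p−λ)^(−m_k)`. -/
theorem resolvent_power_iterated_deriv
    (A : Type*) [NormedRing A] [NormedAlgebra ℂ A] [CompleteSpace A]
    (p w : A) (U : Set ℂ) (hU : IsOpen U)
    (hinv : ∀ lam ∈ U, IsUnit (p - lam • (1 : A))) (k : ℕ) :
    ContDiffOn ℂ (⊤ : ℕ∞)
      (fun lam : ℂ => Ring.inverse (p - lam • (1 : A)) *
        (w * Ring.inverse (p - lam • (1 : A))) ^ k) U ∧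
    ∀ m : ℕ, 1 ≤ m → ∀ lam ∈ U,
      iteratedDerivWithin (m - 1)
          (fun lam : ℂ => Ring.inverse (p - lam • (1 : A)) *
            (w * Ring.inverse (p - lam • (1 : A))) ^ k) U lam
        = (m - 1).factorial •
            ∑ ms ∈ (Finset.Nat.antidiagonalTuple (k + 1) (m + k)).filter
                (fun ms => ∀ i, 1 ≤ ms i),
              Ring.inverse (p - lam • (1 : A)) ^ ms 0 *
                (List.ofFn fun i : Fin k =>
                  w * Ring.inverse (p - lam • (1 : A)) ^ ms i.succ).prod := by
  have hres : AnalyticOnNhd ℂ (fun lam : ℂ => Ring.inverse (p - lam • (1 : A))) U := by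
    intro lam hlam
    have h1 : AnalyticAt ℂ (fun lam : ℂ => p - lam • (1 : A)) lam :=
      analyticAt_const.sub (analyticAt_id.smul analyticAt_const)
    have h2 : AnalyticAt ℂ (Ring.inverse : A → A) (p - lam • (1 : A)) := by
      have := analyticAt_inverse (𝕜 := ℂ) (hinv lam hlam).unit
      rwa [(hinv lam hlam).unit_spec] at this
    exact AnalyticAt.comp (g := (Ring.inverse : A → A)) (f := fun lam : ℂ => p - lam • (1 : A)) h2 h1
  constructor
  · have hA : AnalyticOnNhd ℂ
        (fun lam : ℂ => Ring.inverse (p - lam • (1 : A)) *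
          (w * Ring.inverse (p - lam • (1 : A))) ^ k) U :=
      fun lam hlam => ((hres lam hlam).mul
        (((analyticAt_const (v := w)).mul (hres lam hlam)).pow k))
    exact hA.contDiffOn_of_completeSpace
  · have key : ∀ j : ℕ, ∀ lam ∈ U,
        iteratedDerivWithin j
            (fun lam : ℂ => Ring.inverse (p - lam • (1 : A)) *
              (w * Ring.inverse (p - lam • (1 : A))) ^ k) U lam
          = j.factorial •
              ∑ ms ∈ (Finset.Nat.antidiagonalTuple (k + 1) (j + 1 + k)).filter
                  (fun ms => ∀ i, 1 ≤ ms i),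
                Ring.inverse (p - lam • (1 : A)) ^ ms 0 *
                  (List.ofFn fun i : Fin k =>
                    w * Ring.inverse (p - lam • (1 : A)) ^ ms i.succ).prod := by
      intro j
      induction j with
      | zero =>
          intro lam hlam
          rw [iteratedDerivWithin_zero]
          have hsing : (Finset.Nat.antidiagonalTuple (k + 1) (0 + 1 + k)).filter
              (fun ms => ∀ i, 1 ≤ ms i) = {fun _ => 1} := by
            ext ms
            simp only [Finset.mem_filter, Finset.Nat.mem_antidiagonalTuple,
              Finset.mem_singleton]
            constructor
            · rintro ⟨hsum, hpos⟩
              funext i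
              by_contra hne
              have h2 : 2 ≤ ms i := by have := hpos i; omega
              have hge : ∑ t : Fin (k+1), (1 + if t = i then 1 else 0) ≤ ∑ t : Fin (k+1), ms t := by
                refine Finset.sum_le_sum fun t _ => ?_
                rcases eq_or_ne t i with rfl | hti
                · simpa using h2
                · simp [hti, hpos t]
              rw [Finset.sum_add_distrib] at hge
              simp [Finset.sum_ite_eq'] at hge
              omega
            · rintro rfl
              refine ⟨?_, fun i => le_refl 1⟩
              simp
              omega
          rw [hsing, Finset.sum_singleton]
          simp [List.ofFn_const, List.prod_replicate]
      | succ j ih =>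
          intro lam hlam
          have hidx : j + 1 + 1 + k = (j + 1 + k) + 1 := by omega
          rw [hidx, iteratedDerivWithin_succ,
            derivWithin_congr (fun x hx => ih x hx) (ih lam hlam)]
          have hterm : ∀ ms : Fin (k+1) → ℕ,
              HasDerivAt (fun x : ℂ => Ring.inverse (p - x • (1 : A)) ^ ms 0 *
                  (List.ofFn fun i : Fin k =>
                    w * Ring.inverse (p - x • (1 : A)) ^ ms i.succ).prod)
                (∑ jj : Fin (k+1), ms jj •
                  (Ring.inverse (p - lam • (1 : A)) ^ (Function.update ms jj (ms jj + 1)) 0 *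
                    (List.ofFn fun i : Fin k =>
                      w * Ring.inverse (p - lam • (1 : A)) ^
                        (Function.update ms jj (ms jj + 1)) i.succ).prod)) lam := by
            intro ms
            have hgen := hasDerivAt_res_prod (hinv lam hlam) (k+1)
              (Fin.cases 1 fun _ => w) ms
            have conv : ∀ (x : ℂ) (ns : Fin (k+1) → ℕ),
                (List.ofFn fun i : Fin (k+1) =>
                    Fin.cases (1:A) (fun _ => w) i * Ring.inverse (p - x • (1 : A)) ^ ns i).prod
                = Ring.inverse (p - x • (1 : A)) ^ ns 0 *
                  (List.ofFn fun i : Fin k =>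
                    w * Ring.inverse (p - x • (1 : A)) ^ ns i.succ).prod := by
              intro x ns; simp [List.ofFn_succ]
            simp only [conv] at hgen
            exact hgen
          have hG : HasDerivAt (fun x : ℂ => j.factorial •
              ∑ ms ∈ (Finset.Nat.antidiagonalTuple (k + 1) (j + 1 + k)).filter
                  (fun ms => ∀ i, 1 ≤ ms i),
                Ring.inverse (p - x • (1 : A)) ^ ms 0 *
                  (List.ofFn fun i : Fin k =>
                    w * Ring.inverse (p - x • (1 : A)) ^ ms i.succ).prod)
              (j.factorial •
                ∑ ms ∈ (Finset.Nat.antidiagonalTuple (k + 1) (j + 1 + k)).filter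
                    (fun ms => ∀ i, 1 ≤ ms i),
                  ∑ jj : Fin (k+1), ms jj •
                    (Ring.inverse (p - lam • (1 : A)) ^ (Function.update ms jj (ms jj + 1)) 0 *
                      (List.ofFn fun i : Fin k =>
                        w * Ring.inverse (p - lam • (1 : A)) ^
                          (Function.update ms jj (ms jj + 1)) i.succ).prod)) lam :=
            (HasDerivAt.fun_sum fun ms _ => hterm ms).const_smul j.factorial
          rw [(hG.hasDerivWithinAt).derivWithin ((hU.uniqueDiffOn) lam hlam)]
          rw [comb_step (k+1) (j + 1 + k) (fun ms =>
            Ring.inverse (p - lam • (1 : A)) ^ ms 0 *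
              (List.ofFn fun i : Fin k =>
                w * Ring.inverse (p - lam • (1 : A)) ^ ms i.succ).prod)]
          rw [smul_smul, show j + 1 + k + 1 - (k + 1) = j + 1 by omega]
          congr 1
          rw [Nat.factorial_succ, Nat.mul_comm]
    intro m hm lam hlam
    have h := key (m - 1) lam hlam
    rwa [show m - 1 + 1 + k = m + k by omega] at h
end

section
/- For every integer j ≥ 0 one has q_j = Σ_{μ,ν ≥ 0, μ+2ν = j} q_{μ,ν} · T^(μ+ν+1) in ℂ[r₁,…,r_m, x₁,…,x_n, ξ₁,…,ξ_n][T], where the q_j are defined recursively by q_{−1} = 0, q_0 = T, and q_{j+1} = T·(Δ − a₂)(q_{j−1}) − T·a₁·q_j for j ≥ 0 (with Δ and multiplication by a₁, a₂ acting coefficientwise in T). -/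
open MvPolynomial

/-- Variable index type: `Fin m` for the curvature variables `r`, then `Fin (2m)` for the
fibre variables `x`, then `Fin (2m)` for the cotangent variables `ξ`. -/
abbrev Idx (m : ℕ) := Fin m ⊕ (Fin (2 * m) ⊕ Fin (2 * m))

/-- The polynomial `a₁ = i·Σ_{j=1}^m (r_j/2)·(x_{2j−1}·ξ_{2j} − x_{2j}·ξ_{2j−1})`. -/
noncomputable def a1 (m : ℕ) : MvPolynomial (Idx m) ℂ :=
  C Complex.I *
    ∑ j : Fin m,
      (C (1 / 2 : ℂ) * X (Sum.inl j)) *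
        (X (Sum.inr (Sum.inl ⟨2 * j.1, by have := j.2; omega⟩)) *
            X (Sum.inr (Sum.inr ⟨2 * j.1 + 1, by have := j.2; omega⟩))
          - X (Sum.inr (Sum.inl ⟨2 * j.1 + 1, by have := j.2; omega⟩)) *
            X (Sum.inr (Sum.inr ⟨2 * j.1, by have := j.2; omega⟩)))

/-- The polynomial `a₂ = −(1/4)·Σ_{j=1}^m (r_j/2)²·(x_{2j−1}² + x_{2j}²)`. -/
noncomputable def a2 (m : ℕ) : MvPolynomial (Idx m) ℂ :=
  -(C (1 / 4 : ℂ) *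
    ∑ j : Fin m,
      (C (1 / 2 : ℂ) * X (Sum.inl j)) ^ 2 *
        (X (Sum.inr (Sum.inl ⟨2 * j.1, by have := j.2; omega⟩)) ^ 2
          + X (Sum.inr (Sum.inl ⟨2 * j.1 + 1, by have := j.2; omega⟩)) ^ 2))

/-- The Laplacian `Δ = Σ_{i=1}^n ∂²/∂x_i²` in the `x`-variables, acting on polynomials. -/
noncomputable def lap (m : ℕ) (p : MvPolynomial (Idx m) ℂ) : MvPolynomial (Idx m) ℂ :=
  ∑ i : Fin (2 * m),
    pderiv (Sum.inr (Sum.inl i)) (pderiv (Sum.inr (Sum.inl i)) p)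

/-- The resolvent-symbol coefficients `q_{μ,ν}`: `q_{0,0} = 1`, `q_{μ,ν} = 0` for a negative
index, and `q_{μ,ν} = −a₁·q_{μ−1,ν} + (Δ − a₂)·q_{μ,ν−1}` otherwise. -/
noncomputable def qc (m : ℕ) : ℕ → ℕ → MvPolynomial (Idx m) ℂ
  | 0, 0 => 1
  | μ + 1, 0 => -a1 m * qc m μ 0
  | 0, ν + 1 => lap m (qc m 0 ν) - a2 m * qc m 0 ν
  | μ + 1, ν + 1 =>
      -a1 m * qc m μ (ν + 1) + (lap m (qc m (μ + 1) ν) - a2 m * qc m (μ + 1) ν)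

/-- The coefficientwise (in `T`) action of the Laplacian `Δ` on `ℂ[r,x,ξ][T]`. -/
noncomputable def lapT (m : ℕ) (p : Polynomial (MvPolynomial (Idx m) ℂ)) :
    Polynomial (MvPolynomial (Idx m) ℂ) :=
  p.sum fun n c => Polynomial.C (lap m c) * Polynomial.X ^ n

/-- The resolvent symbols `q_j ∈ ℂ[r,x,ξ][T]`, defined recursively by `q_{−1} = 0`, `q_0 = T`,
and `q_{j+1} = T·(Δ − a₂)(q_{j−1}) − T·a₁·q_j` (with `Δ` and multiplication by `a₁`, `a₂`
acting coefficientwise in `T`). -/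
noncomputable def qres (m : ℕ) : ℕ → Polynomial (MvPolynomial (Idx m) ℂ)
  | 0 => Polynomial.X
  | 1 => -(Polynomial.X * (Polynomial.C (a1 m) * qres m 0))
  | j + 2 =>
      Polynomial.X * (lapT m (qres m j) - Polynomial.C (a2 m) * qres m j)
        - Polynomial.X * (Polynomial.C (a1 m) * qres m (j + 1))

lemma lap_add' (m : ℕ) (p q : MvPolynomial (Idx m) ℂ) :
    lap m (p + q) = lap m p + lap m q := by
  simp [lap, map_add, Finset.sum_add_distrib]

lemma lap_zero' (m : ℕ) : lap m 0 = 0 := by simp [lap]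

lemma lapT_monomial' (m : ℕ) (n : ℕ) (c : MvPolynomial (Idx m) ℂ) :
    lapT m (Polynomial.C c * Polynomial.X ^ n)
      = Polynomial.C (lap m c) * Polynomial.X ^ n := by
  rw [Polynomial.C_mul_X_pow_eq_monomial, lapT, Polynomial.sum_monomial_index]
  simp [lap_zero']

lemma lapT_add' (m : ℕ) (p q : Polynomial (MvPolynomial (Idx m) ℂ)) :
    lapT m (p + q) = lapT m p + lapT m q := by
  unfold lapT
  rw [Polynomial.sum_add_index]
  · intro i; simp [lap_zero']
  · intro a b₁ b₂; rw [lap_add', map_add, add_mul]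

lemma lapT_zero' (m : ℕ) : lapT m 0 = 0 := by simp [lapT]

lemma lapT_sum' {α : Type*} (m : ℕ) (s : Finset α)
    (f : α → Polynomial (MvPolynomial (Idx m) ℂ)) :
    lapT m (∑ i ∈ s, f i) = ∑ i ∈ s, lapT m (f i) := by
  classical
  induction s using Finset.induction with
  | empty => simp [lapT_zero']
  | insert _ _ h ih => rw [Finset.sum_insert h, Finset.sum_insert h, lapT_add', ih]

lemma qc_split (m : ℕ) (μ ν : ℕ) (h : μ + 2 * ν ≠ 0) :
    Polynomial.C (qc m μ ν) * Polynomial.X ^ (μ + ν + 1)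
      = (if μ = 0 then 0
          else Polynomial.C (-a1 m * qc m (μ - 1) ν) * Polynomial.X ^ (μ + ν + 1))
        + (if ν = 0 then 0
          else Polynomial.C (lap m (qc m μ (ν - 1)) - a2 m * qc m μ (ν - 1))
            * Polynomial.X ^ (μ + ν + 1)) := by
  match μ, ν with
  | 0, 0 => omega
  | μ + 1, 0 => simp [qc]
  | 0, ν + 1 => simp [qc]
  | μ + 1, ν + 1 => simp [qc, map_add, add_mul]


/-- **Resolvent symbol expansion.**  For every `j ≥ 0`,
`q_j = Σ_{μ+2ν=j} q_{μ,ν} · T^(μ+ν+1)` in `ℂ[r,x,ξ][T]`. -/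
theorem qres_eq_sum_qc (m : ℕ) (hm : 1 ≤ m) (j : ℕ) :
    qres m j
      = ∑ p ∈ (Finset.range (j + 1) ×ˢ Finset.range (j + 1)).filter
          (fun p => p.1 + 2 * p.2 = j),
          Polynomial.C (qc m p.1 p.2) * Polynomial.X ^ (p.1 + p.2 + 1) := by
  induction j using Nat.twoStepInduction with
  | zero =>
      have : (Finset.range 1 ×ˢ Finset.range 1).filter
          (fun p : ℕ × ℕ => p.1 + 2 * p.2 = 0) = {(0, 0)} := by decide
      rw [this]
      simp [qres, qc]
  | one =>
      have : (Finset.range 2 ×ˢ Finset.range 2).filter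
          (fun p : ℕ × ℕ => p.1 + 2 * p.2 = 1) = {(1, 0)} := by decide
      rw [this]
      simp [qres, qc]
      ring
  | more j ih1 ih2 =>
      rw [qres, ih1, ih2]
      -- abbreviations
      set F : ℕ → Finset (ℕ × ℕ) := fun k =>
        (Finset.range (k + 1) ×ˢ Finset.range (k + 1)).filter
          (fun p => p.1 + 2 * p.2 = k) with hF
      have memF : ∀ k p, p ∈ F k ↔ p.1 + 2 * p.2 = k := by
        intro k p
        simp only [hF, Finset.mem_filter, Finset.mem_product, Finset.mem_range]
        omega
      have hB : Polynomial.X *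
            (lapT m (∑ p ∈ F j, Polynomial.C (qc m p.1 p.2)
                * Polynomial.X ^ (p.1 + p.2 + 1))
              - Polynomial.C (a2 m) * ∑ p ∈ F j, Polynomial.C (qc m p.1 p.2)
                * Polynomial.X ^ (p.1 + p.2 + 1))
          = ∑ p ∈ F j, Polynomial.C (lap m (qc m p.1 p.2) - a2 m * qc m p.1 p.2)
              * Polynomial.X ^ (p.1 + p.2 + 2) := by
        rw [lapT_sum']
        simp only [lapT_monomial']
        rw [Finset.mul_sum, ← Finset.sum_sub_distrib, Finset.mul_sum]
        refine Finset.sum_congr rfl fun p _ => ?_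
        rw [map_sub, map_mul]
        ring
      have hA : Polynomial.X * (Polynomial.C (a1 m)
            * ∑ p ∈ F (j + 1), Polynomial.C (qc m p.1 p.2)
                * Polynomial.X ^ (p.1 + p.2 + 1))
          = ∑ p ∈ F (j + 1), Polynomial.C (a1 m * qc m p.1 p.2)
              * Polynomial.X ^ (p.1 + p.2 + 2) := by
        rw [Finset.mul_sum, Finset.mul_sum]
        refine Finset.sum_congr rfl fun p _ => ?_
        rw [map_mul]
        ring
      rw [hB, hA]
      -- rewrite RHS using the splitting of qc
      have hsplit : ∑ p ∈ F (j + 2), Polynomial.C (qc m p.1 p.2)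
            * Polynomial.X ^ (p.1 + p.2 + 1)
          = (∑ p ∈ F (j + 2), (if p.1 = 0 then 0
              else Polynomial.C (-a1 m * qc m (p.1 - 1) p.2)
                * Polynomial.X ^ (p.1 + p.2 + 1)))
            + ∑ p ∈ F (j + 2), (if p.2 = 0 then 0
              else Polynomial.C (lap m (qc m p.1 (p.2 - 1)) - a2 m * qc m p.1 (p.2 - 1))
                * Polynomial.X ^ (p.1 + p.2 + 1)) := by
        rw [← Finset.sum_add_distrib]
        refine Finset.sum_congr rfl fun p hp => ?_
        exact qc_split m p.1 p.2 (by rw [memF] at hp; omega)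
      have h1 : ∑ p ∈ F (j + 2), (if p.1 = 0 then 0
            else Polynomial.C (-a1 m * qc m (p.1 - 1) p.2)
              * Polynomial.X ^ (p.1 + p.2 + 1))
          = ∑ p ∈ F (j + 1), Polynomial.C (-a1 m * qc m p.1 p.2)
              * Polynomial.X ^ (p.1 + p.2 + 2) := by
        rw [← Finset.sum_filter_of_ne (p := fun p : ℕ × ℕ => p.1 ≠ 0)
          (by intro x _ hx h0; exact hx (by simp [h0]))]
        refine Finset.sum_nbij' (fun p => (p.1 - 1, p.2)) (fun p => (p.1 + 1, p.2))
          ?_ ?_ ?_ ?_ ?_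
        · intro p hp
          simp only [Finset.mem_filter, memF] at hp ⊢
          omega
        · intro p hp
          simp only [Finset.mem_filter, memF] at hp ⊢
          omega
        · intro p hp
          simp only [Finset.mem_filter] at hp
          have := hp.2
          ext <;> simp <;> omega
        · intro p hp; ext <;> simp
        · intro p hp
          simp only [Finset.mem_filter] at hp
          rw [if_neg hp.2]
          have : p.1 + p.2 + 1 = p.1 - 1 + p.2 + 2 := by omega
          rw [this]
      have h2 : ∑ p ∈ F (j + 2), (if p.2 = 0 then 0
            else Polynomial.C (lap m (qc m p.1 (p.2 - 1)) - a2 m * qc m p.1 (p.2 - 1))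
              * Polynomial.X ^ (p.1 + p.2 + 1))
          = ∑ p ∈ F j, Polynomial.C (lap m (qc m p.1 p.2) - a2 m * qc m p.1 p.2)
              * Polynomial.X ^ (p.1 + p.2 + 2) := by
        rw [← Finset.sum_filter_of_ne (p := fun p : ℕ × ℕ => p.2 ≠ 0)
          (by intro x _ hx h0; exact hx (by simp [h0]))]
        refine Finset.sum_nbij' (fun p => (p.1, p.2 - 1)) (fun p => (p.1, p.2 + 1))
          ?_ ?_ ?_ ?_ ?_
        · intro p hp
          simp only [Finset.mem_filter, memF] at hp ⊢
          omega
        · intro p hp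
          simp only [Finset.mem_filter, memF] at hp ⊢
          omega
        · intro p hp
          simp only [Finset.mem_filter] at hp
          have := hp.2
          ext <;> simp <;> omega
        · intro p hp; ext <;> simp
        · intro p hp
          simp only [Finset.mem_filter] at hp
          rw [if_neg hp.2]
          have : p.1 + p.2 + 1 = p.1 + (p.2 - 1) + 2 := by omega
          rw [this]
      rw [hsplit, h1, h2]
      have hneg : ∑ x ∈ F (j + 1), Polynomial.C (-a1 m * qc m x.1 x.2)
            * Polynomial.X ^ (x.1 + x.2 + 2)
          = -∑ x ∈ F (j + 1), Polynomial.C (a1 m * qc m x.1 x.2)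
            * Polynomial.X ^ (x.1 + x.2 + 2) := by
        rw [← Finset.sum_neg_distrib]
        exact Finset.sum_congr rfl fun p _ => by rw [neg_mul, map_neg]; ring
      rw [hneg]
      ring
end
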